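/- (Yudin's inequality) Let A ⊆ F_p, r ≠ 0, and |Â(r)| = δα where α = |A|/p > 0. Then |Â(2r)| ≥ (2δ² − 1)α. -/

import Mathlib

open Finset

/-- The Fourier coefficient of the indicator function of `A` at `r`. -/
noncomputable def ft {p : ℕ} [NeZero p] (A : Finset (ZMod p)) (r : ZMod p) : ℂ :=
  (p : ℂ)⁻¹ * ∑ x : ZMod p,
    if x ∈ A then Complex.exp (-(2 * Real.pi * Complex.I * ((r * x).val : ℕ) / p)) else 0

noncomputable def ee (p : ℕ) (n : ℕ) : ℂ :=
  Complex.exp (-(2 * Real.pi * Complex.I * (n : ℕ) / p))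

lemma ee_abs (p : ℕ) [NeZero p] (n : ℕ) : ‖ee p n‖ = 1 := by
  have : (-(2 * Real.pi * Complex.I * (n : ℕ) / p)) = ((-(2 * Real.pi * n / p) : ℝ) : ℂ) * Complex.I := by
    push_cast; ring
  rw [ee, this, Complex.norm_exp_ofReal_mul_I]

lemma ee_mod (p : ℕ) [NeZero p] (a : ℕ) : ee p a = ee p (a % p) := by
  have hp : (p:ℂ) ≠ 0 := Nat.cast_ne_zero.2 (NeZero.ne p)
  have key : ∀ q m : ℕ, ee p (p * q + m) = ee p m := by
    intro q m
    rw [ee, ee]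
    have h : (-(2 * Real.pi * Complex.I * ((p * q + m : ℕ)) / p)) =
        ((-(q : ℤ)) : ℂ) * (2 * Real.pi * Complex.I) +
          (-(2 * Real.pi * Complex.I * ((m : ℕ)) / p)) := by
      push_cast; field_simp; ring
    have e1 := Complex.exp_int_mul_two_pi_mul_I (-(q:ℤ))
    push_cast at e1 h ⊢
    rw [h, Complex.exp_add, e1, one_mul]
  conv_lhs => rw [← Nat.div_add_mod a p]
  exact key _ _

lemma ee_congr (p : ℕ) [NeZero p] (a b : ℕ) (h : (a : ZMod p) = (b : ZMod p)) :
    ee p a = ee p b := by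
  have h' : a % p = b % p := (ZMod.natCast_eq_natCast_iff a b p).1 h
  rw [ee_mod p a, ee_mod p b, h']

lemma key {ι : Type*} (A : Finset ι) (z : ι → ℂ) (hz : ∀ x ∈ A, ‖z x‖ = 1) :
    2 * (‖∑ x ∈ A, z x‖)^2 ≤
      (A.card : ℝ)^2 + A.card * ‖∑ x ∈ A, (z x)^2‖ := by
  set S := ∑ x ∈ A, z x with hS
  rcases eq_or_ne S 0 with h0 | h0
  · rw [h0]; simp; positivity
  · set u : ℂ := (starRingEnd ℂ) S / ((‖S‖ : ℝ) : ℂ) with hu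
    have habsS : (0:ℝ) < ‖S‖ := by
      simpa [norm_pos_iff] using h0
    have huabs : ‖u‖ = 1 := by
      rw [hu, norm_div, Complex.norm_conj, Complex.norm_real, Real.norm_eq_abs,
        abs_of_pos habsS, div_self habsS.ne']
    have huS : u * S = ((‖S‖ : ℝ) : ℂ) := by
      have hm : (starRingEnd ℂ) S * S = (((‖S‖ : ℝ) : ℂ))^2 := by
        rw [mul_comm, Complex.mul_conj]
        norm_cast
        exact (Complex.sq_norm S).symm
      rw [hu, div_mul_eq_mul_div, hm, sq, mul_div_assoc,
        div_self (Complex.ofReal_ne_zero.2 habsS.ne'), mul_one]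
    have hre : ‖S‖ = ∑ x ∈ A, (u * z x).re := by
      have : (u * S).re = ‖S‖ := by rw [huS]; simp
      rw [← this, hS, Finset.mul_sum, Complex.re_sum]
    have hCS : (‖S‖)^2 ≤ (A.card : ℝ) * ∑ x ∈ A, ((u * z x).re)^2 := by
      rw [hre]
      calc (∑ x ∈ A, (u * z x).re)^2 = (∑ x ∈ A, 1 * (u * z x).re)^2 := by simp
        _ ≤ (∑ x ∈ A, (1:ℝ)^2) * (∑ x ∈ A, ((u * z x).re)^2) :=
            Finset.sum_mul_sq_le_sq_mul_sq _ _ _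
        _ = (A.card : ℝ) * ∑ x ∈ A, ((u * z x).re)^2 := by simp
    have hsq : ∀ x ∈ A, ((u * z x).re)^2 = (1 + ((u * z x)^2).re)/2 := by
      intro x hx
      have h1 : ‖u * z x‖ = 1 := by rw [norm_mul, huabs, hz x hx, one_mul]
      have h2 : (u * z x).re^2 + (u * z x).im^2 = 1 := by
        have := Complex.sq_norm (u * z x)
        rw [h1] at this
        simpa [Complex.normSq_apply, sq] using this.symm
      have h3 : ((u * z x)^2).re = (u * z x).re^2 - (u * z x).im^2 := by
        simp only [sq, Complex.mul_re]
      rw [h3]; linarith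
    have hsum : ∑ x ∈ A, ((u * z x).re)^2
        = ((A.card : ℝ) + (u^2 * ∑ x ∈ A, (z x)^2).re)/2 := by
      rw [Finset.sum_congr rfl hsq, ← Finset.sum_div, Finset.sum_add_distrib,
        Finset.sum_const, nsmul_eq_mul, mul_one, Finset.mul_sum, Complex.re_sum]
      congr 2
      exact Finset.sum_congr rfl fun x _ => by rw [mul_pow]
    have hbd : (u^2 * ∑ x ∈ A, (z x)^2).re ≤ ‖∑ x ∈ A, (z x)^2‖ := by
      calc (u^2 * ∑ x ∈ A, (z x)^2).re ≤ ‖u^2 * ∑ x ∈ A, (z x)^2‖ :=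
            Complex.re_le_norm _
        _ = ‖∑ x ∈ A, (z x)^2‖ := by
            rw [norm_mul, norm_pow, huabs, one_pow, one_mul]
    have hcard : (0:ℝ) ≤ (A.card : ℝ) := Nat.cast_nonneg _
    nlinarith [hCS, hsum, hbd]

theorem stmt9 {p : ℕ} [Fact p.Prime] (hodd : Odd p) (A : Finset (ZMod p))
    (α δ : ℝ) (hα : α = (A.card : ℝ) / p) (hαpos : 0 < α)
    (r : ZMod p) (hr : r ≠ 0)
    (hδ : ‖ft A r‖ = δ * α) :
    (2 * δ ^ 2 - 1) * α ≤ ‖ft A (2 * r)‖ := by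
  have hp : (0:ℝ) < p := by exact_mod_cast (Fact.out : p.Prime).pos
  set z : ZMod p → ℂ := fun x => ee p ((r * x).val) with hz
  have hft1 : ft A r = (p:ℂ)⁻¹ * ∑ x ∈ A, z x := by
    rw [ft]
    congr 1
    rw [← Finset.sum_filter, Finset.filter_mem_eq_inter, Finset.univ_inter]
    rfl
  have hft2 : ft A (2*r) = (p:ℂ)⁻¹ * ∑ x ∈ A, (z x)^2 := by
    rw [ft]
    congr 1
    rw [← Finset.sum_filter, Finset.filter_mem_eq_inter, Finset.univ_inter]
    refine Finset.sum_congr rfl fun x hx => ?_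
    have hsq : (z x)^2 = ee p (2 * (r*x).val) := by
      simp only [hz]
      rw [ee, ee, ← Complex.exp_nat_mul]
      congr 1
      push_cast
      ring
    rw [hsq]
    have hc : ((2 * (r*x).val : ℕ) : ZMod p) = (((2 * r * x).val : ℕ) : ZMod p) := by
      push_cast [ZMod.natCast_val, ZMod.cast_id]
      ring
    rw [ee_congr p _ _ hc]
    rfl
  have habs1 : ‖∑ x ∈ A, z x‖ = p * (δ * α) := by
    have h := hδ
    rw [hft1, norm_mul, norm_inv, Complex.norm_natCast] at h
    field_simp at h
    linarith [h]
  have habs2 : ‖ft A (2*r)‖ = (p:ℝ)⁻¹ * ‖∑ x ∈ A, (z x)^2‖ := by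
    rw [hft2, norm_mul, norm_inv, Complex.norm_natCast]
  have hcard : (A.card : ℝ) = α * p := by rw [hα, div_mul_cancel₀ _ hp.ne']
  have hk := key A z (fun x _ => ee_abs p _)
  rw [habs1, hcard] at hk
  have hT : ‖∑ x ∈ A, (z x)^2‖ = p * ‖ft A (2*r)‖ := by
    rw [habs2]; field_simp
  rw [hT] at hk
  have hF : (0:ℝ) ≤ ‖ft A (2*r)‖ := norm_nonneg _
  nlinarith [hk, mul_pos (mul_pos hp hp) hαpos]
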